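/- arXiv:2002.00357 — 5 statements merged into one kernel-verified Lean document; each statement's English description precedes it below -/
import Mathlib

section
/- For a positive probability distribution (p_{ijk}), (i,j,k) ≠ (0,0,0), on the three-way incomplete product, the following three ratios are all equal: COR(B,C|A=1)/CASR(B,C|A=0) = COR(A,C|B=1)/CASR(A,C|B=0) = COR(A,B|C=1)/CASR(A,B|C=0), and their common value equals the second order Aitchison–Silvey ratio ASR(A,B,C) = (p_{111} p_{100} p_{010} p_{001})/(p_{110} p_{101} p_{011}). -/
/-- For a positive distribution on the three-way incomplete product, the ratio
COR/CASR does not depend on the conditioning variable, and the common value is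
the second order Aitchison–Silvey ratio. -/
theorem stmt3 (p100 p010 p001 p110 p101 p011 p111 : ℝ)
    (h100 : 0 < p100) (h010 : 0 < p010) (h001 : 0 < p001)
    (h110 : 0 < p110) (h101 : 0 < p101) (h011 : 0 < p011) (h111 : 0 < p111)
    (hsum : p100 + p010 + p001 + p110 + p101 + p011 + p111 = 1) :
    ((p111 * p100) / (p110 * p101)) / (p011 / (p010 * p001)) =
      ((p111 * p010) / (p110 * p011)) / (p101 / (p100 * p001)) ∧
    ((p111 * p010) / (p110 * p011)) / (p101 / (p100 * p001)) =
      ((p111 * p001) / (p101 * p011)) / (p110 / (p100 * p010)) ∧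
    ((p111 * p001) / (p101 * p011)) / (p110 / (p100 * p010)) =
      (p111 * p100 * p010 * p001) / (p110 * p101 * p011) := by
  refine ⟨?_, ?_, ?_⟩ <;> field_simp <;> ring
end

section
/- The recursive decomposition of conditional AS ratios: for a positive distribution on the k-way incomplete product with k ≥ 3, a cell i with |φ(i)| > 2, and a single feature F̃ ∈ φ(i), one has CASR(φ(i) | F\φ(i) = 0) = COR(φ(i)\F̃ | F̃ = 1, F\φ(i) = 0) / CASR(φ(i)\F̃ | F̃ = 0, F\φ(i) = 0). -/
variable {F : Type*} [Fintype F] [DecidableEq F]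

lemma sdiff_erase_erase {V J : Finset F} {f : F} (hJ : J ⊆ V) (hfJ : f ∈ J) :
    V \ J = (V.erase f) \ (J.erase f) := by
  ext x
  simp only [Finset.mem_sdiff, Finset.mem_erase]
  constructor
  · intro ⟨h1, h2⟩
    exact ⟨⟨fun hx => h2 (hx ▸ hfJ), h1⟩, fun h => h2 h.2⟩
  · intro ⟨⟨hne, h1⟩, h2⟩
    exact ⟨h1, fun h => h2 ⟨hne, h⟩⟩

lemma card_sdiff_succ {V J : Finset F} {f : F} (hfV : f ∈ V) (hJ : J ⊆ V.erase f) :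
    (V \ J).card = ((V.erase f) \ J).card + 1 := by
  have h1 : V \ J = insert f ((V.erase f) \ J) := by
    ext x
    simp only [Finset.mem_sdiff, Finset.mem_insert, Finset.mem_erase]
    constructor
    · intro ⟨h1, h2⟩
      by_cases hx : x = f
      · exact Or.inl hx
      · exact Or.inr ⟨⟨hx, h1⟩, h2⟩
    · rintro (rfl | ⟨⟨_, h1⟩, h2⟩)
      · exact ⟨hfV, fun h => (Finset.mem_erase.1 (hJ h)).1 rfl⟩
      · exact ⟨h1, h2⟩
  rw [h1, Finset.card_insert_of_notMem (by simp)]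

lemma key (p : Finset F → ℝ) {V : Finset F} {f : F} (hf : f ∈ V)
    (P : ℕ → Prop) [DecidablePred P] (hP : ∀ n, P (n + 1) ↔ ¬ P n) :
    ∏ J ∈ V.powerset.filter (fun J => J.Nonempty ∧ P (V \ J).card), p J
    = (∏ K ∈ (V.erase f).powerset.filter (fun K => P ((V.erase f) \ K).card),
        p (insert f K))
      * (∏ J ∈ (V.erase f).powerset.filter
          (fun J => J.Nonempty ∧ ¬ P ((V.erase f) \ J).card), p J) := by
  rw [← Finset.prod_filter_mul_prod_filter_not
      (V.powerset.filter (fun J => J.Nonempty ∧ P (V \ J).card)) (fun J => f ∈ J)]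
  congr 1
  · refine Finset.prod_bij' (fun J _ => J.erase f) (fun K _ => insert f K) ?_ ?_ ?_ ?_ ?_
    · intro J hJ
      simp only [Finset.mem_filter, Finset.mem_powerset] at hJ ⊢
      obtain ⟨⟨hJV, _, hpar⟩, hfJ⟩ := hJ
      refine ⟨Finset.erase_subset_erase f hJV, ?_⟩
      rwa [← sdiff_erase_erase hJV hfJ]
    · intro K hK
      simp only [Finset.mem_filter, Finset.mem_powerset] at hK ⊢
      refine ⟨⟨?_, ⟨f, Finset.mem_insert_self f K⟩, ?_⟩, Finset.mem_insert_self f K⟩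
      · exact Finset.insert_subset hf (hK.1.trans (Finset.erase_subset f V))
      · rw [sdiff_erase_erase (Finset.insert_subset hf (hK.1.trans (Finset.erase_subset f V)))
          (Finset.mem_insert_self f K),
          Finset.erase_insert (fun h => (Finset.mem_erase.1 (hK.1 h)).1 rfl)]
        · exact hK.2
    · intro J hJ
      simp only [Finset.mem_filter] at hJ
      exact Finset.insert_erase hJ.2
    · intro K hK
      simp only [Finset.mem_filter, Finset.mem_powerset] at hK
      exact Finset.erase_insert (fun h => (Finset.mem_erase.1 (hK.1 h)).1 rfl)
    · intro J hJ
      simp only [Finset.mem_filter] at hJ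
      rw [Finset.insert_erase hJ.2]
  · apply Finset.prod_congr _ (fun _ _ => rfl)
    ext J
    simp only [Finset.mem_filter, Finset.mem_powerset]
    constructor
    · intro ⟨⟨hJV, hne, hpar⟩, hfJ⟩
      have hJE : J ⊆ V.erase f := fun x hx =>
        Finset.mem_erase.2 ⟨fun h => hfJ (h ▸ hx), hJV hx⟩
      refine ⟨hJE, hne, ?_⟩
      rw [card_sdiff_succ hf hJE, hP] at hpar
      exact fun h => hpar h
    · intro ⟨hJE, hne, hpar⟩
      have hfJ : f ∉ J := fun h => (Finset.mem_erase.1 (hJE h)).1 rfl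
      refine ⟨⟨hJE.trans (Finset.erase_subset f V), hne, ?_⟩, hfJ⟩
      rw [card_sdiff_succ hf hJE, hP]
      exact hpar

/-- The conditional Aitchison–Silvey ratio of the features in `V`
(all other features conditioned to be 0), for cell probabilities `p`
indexed by nonempty subsets of features. -/
noncomputable def CASR (p : Finset F → ℝ) (V : Finset F) : ℝ :=
  (∏ J ∈ V.powerset.filter (fun J => J.Nonempty ∧ Even (V \ J).card), p J) /
  (∏ J ∈ V.powerset.filter (fun J => J.Nonempty ∧ Odd (V \ J).card), p J)

/-- The conditional odds ratio of the features in `V \ {f}`, conditioned on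
the feature `f` being 1 and all features outside `V` being 0. -/
noncomputable def CORcond (p : Finset F → ℝ) (V : Finset F) (f : F) : ℝ :=
  (∏ K ∈ (V.erase f).powerset.filter (fun K => Even ((V.erase f) \ K).card),
      p (insert f K)) /
  (∏ K ∈ (V.erase f).powerset.filter (fun K => Odd ((V.erase f) \ K).card),
      p (insert f K))

/-- Recursive decomposition of conditional AS ratios:
`CASR(φ(i) | F\φ(i)=0) = COR(φ(i)\F̃ | F̃=1, F\φ(i)=0) / CASR(φ(i)\F̃ | F̃=0, F\φ(i)=0)`. -/
theorem stmt8 (p : Finset F → ℝ) (hp : ∀ I : Finset F, I.Nonempty → 0 < p I)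
    (hk : 3 ≤ Fintype.card F) (V : Finset F) (hV : 2 < V.card)
    (f : F) (hf : f ∈ V) :
    CASR p V = CORcond p V f / CASR p (V.erase f) := by
  classical
  have h1 := key p hf Even (fun n => Nat.even_add_one)
  have h2 := key p hf Odd (fun n => Nat.odd_add_one)
  have e1 : ((V.erase f).powerset.filter
      (fun J => J.Nonempty ∧ ¬ Even ((V.erase f) \ J).card))
      = ((V.erase f).powerset.filter
      (fun J => J.Nonempty ∧ Odd ((V.erase f) \ J).card)) := by
    apply Finset.filter_congr; intro J _; simp [Nat.not_even_iff_odd]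
  have e2 : ((V.erase f).powerset.filter
      (fun J => J.Nonempty ∧ ¬ Odd ((V.erase f) \ J).card))
      = ((V.erase f).powerset.filter
      (fun J => J.Nonempty ∧ Even ((V.erase f) \ J).card)) := by
    apply Finset.filter_congr; intro J _; simp [Nat.not_odd_iff_even]
  rw [e1] at h1
  rw [e2] at h2
  unfold CASR CORcond
  rw [h1, h2]
  have hNe : (0:ℝ) < ∏ K ∈ (V.erase f).powerset.filter
      (fun K => Even ((V.erase f) \ K).card), p (insert f K) :=
    Finset.prod_pos (fun K _ => hp _ ⟨f, Finset.mem_insert_self f K⟩)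
  have hNo : (0:ℝ) < ∏ K ∈ (V.erase f).powerset.filter
      (fun K => Odd ((V.erase f) \ K).card), p (insert f K) :=
    Finset.prod_pos (fun K _ => hp _ ⟨f, Finset.mem_insert_self f K⟩)
  have hDe : (0:ℝ) < ∏ J ∈ (V.erase f).powerset.filter
      (fun J => J.Nonempty ∧ Even ((V.erase f) \ J).card), p J :=
    Finset.prod_pos (fun J hJ => hp _ (Finset.mem_filter.1 hJ).2.1)
  have hDo : (0:ℝ) < ∏ J ∈ (V.erase f).powerset.filter
      (fun J => J.Nonempty ∧ Odd ((V.erase f) \ J).card), p J :=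
    Finset.prod_pos (fun J hJ => hp _ (Finset.mem_filter.1 hJ).2.1)
  field_simp
end

section
/- If an ascending class F_asc of subsets of F is nonempty (not equal to {∅}), then the HAS model design matrix A (rows indexed by the complementary descending class) does not contain the all-ones vector in its row space; specifically, the vector d with d(j) = +1 if the parity of |φ(j)| equals the parity of k and d(j) = −1 otherwise lies in Ker(A) and satisfies 1^T d ≠ 0. -/
open Matrix Finset

lemma powR {α : Type*} [DecidableEq α] (x : Finset α) (h0 : x.Nonempty) :
    (∑ m ∈ x.powerset, (-1 : ℝ) ^ m.card) = 0 := by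
  have := Finset.sum_powerset_neg_one_pow_card_of_nonempty h0
  have : ((∑ m ∈ x.powerset, (-1 : ℤ) ^ m.card : ℤ) : ℝ) = 0 := by rw [this]; simp
  push_cast at this
  exact this

lemma supersetSum {F : Type*} [Fintype F] [DecidableEq F] (V : Finset F)
    (hV : V ≠ Finset.univ) :
    ∑ J ∈ Finset.univ.filter (fun J : Finset F => V ⊆ J), (-1 : ℝ) ^ J.card = 0 := by
  have hbij : ∑ J ∈ Finset.univ.filter (fun J : Finset F => V ⊆ J), (-1 : ℝ) ^ J.card
      = ∑ t ∈ (Finset.univ \ V).powerset, (-1 : ℝ) ^ (V ∪ t).card := by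
    refine Finset.sum_nbij' (fun J => J \ V) (fun t => V ∪ t) ?_ ?_ ?_ ?_ ?_
    · intro J hJ
      simp only [mem_filter] at hJ
      exact Finset.mem_powerset.2 (Finset.sdiff_subset_sdiff (Finset.subset_univ _) le_rfl)
    · intro t ht; simp
    · intro J hJ
      simp only [mem_filter] at hJ
      exact Finset.union_sdiff_of_subset hJ.2
    · intro t ht
      simp only [Finset.mem_powerset] at ht
      rw [Finset.union_sdiff_cancel_left (Finset.disjoint_left.2 fun a ha hat => (Finset.mem_sdiff.1 (ht hat)).2 ha)]
    · intro J hJ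
      simp only [mem_filter] at hJ
      rw [Finset.union_sdiff_of_subset hJ.2]
  rw [hbij]
  have : ∀ t ∈ (Finset.univ \ V).powerset, (-1 : ℝ) ^ (V ∪ t).card
      = (-1 : ℝ) ^ V.card * (-1 : ℝ) ^ t.card := by
    intro t ht
    simp only [Finset.mem_powerset] at ht
    have hdisj : Disjoint V t := Finset.disjoint_left.2 fun a ha hat =>
      (Finset.mem_sdiff.1 (ht hat)).2 ha
    rw [Finset.card_union_of_disjoint hdisj, pow_add]
  rw [Finset.sum_congr rfl this, ← Finset.mul_sum,
    powR _ (by rw [Finset.sdiff_nonempty]; intro h; exact hV ((Finset.univ_subset_iff.1 h))), mul_zero]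

set_option maxHeartbeats 1000000 in
/-- If an ascending class `F_asc` is nonempty and not `{∅}`, then the HAS
design matrix `A` (rows indexed by the complementary descending class, entry
`1` iff the row subset is contained in the cell subset) does not contain the
all-ones vector in its row space; specifically the parity-sign vector `d`
lies in `Ker(A)` and has `1ᵀ d ≠ 0`. -/
theorem stmt9 (F : Type*) [Fintype F] [DecidableEq F]
    (Fasc : Finset (Finset F))
    (hAscending : ∀ S ∈ Fasc, ∀ T : Finset F, S ⊆ T → T ∈ Fasc)
    (hNonempty : Fasc.Nonempty) (hNe : Fasc ≠ {∅})
    (A : Matrix {V : Finset F // V ∉ Fasc ∧ V.Nonempty}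
        {J : Finset F // J.Nonempty} ℝ)
    (hA : ∀ V J, A V J = if V.1 ⊆ J.1 then 1 else 0)
    (d : {J : Finset F // J.Nonempty} → ℝ)
    (hd : ∀ J, d J = if (J.1.card % 2 = Fintype.card F % 2) then 1 else -1) :
    A.mulVec d = 0 ∧ (∑ J, d J) ≠ 0 ∧
      ¬ ∃ y : {V : Finset F // V ∉ Fasc ∧ V.Nonempty} → ℝ,
          Matrix.vecMul y A = fun _ => 1 := by
  classical
  obtain ⟨S, hS⟩ := hNonempty
  have huniv : Finset.univ ∈ Fasc := hAscending S hS _ (Finset.subset_univ S)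
  set k := Fintype.card F with hkdef
  have hk : k ≠ 0 := by
    intro h
    apply hNe
    have hu : (Finset.univ : Finset F) = ∅ := by
      rw [← Finset.card_eq_zero, Finset.card_univ, ← hkdef, h]
    have hall : ∀ T : Finset F, T = ∅ := fun T =>
      Finset.subset_empty.1 (hu ▸ Finset.subset_univ T)
    apply Finset.eq_singleton_iff_unique_mem.2
    exact ⟨hall S ▸ hS, fun x _ => hall x⟩
  have hdval : ∀ J, d J = (-1 : ℝ) ^ (J.1.card + k) := by
    intro J
    rw [hd]
    by_cases h : J.1.card % 2 = Fintype.card F % 2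
    · have he : Even (J.1.card + k) := by
        rw [Nat.even_add, Nat.even_iff, Nat.even_iff]
        rw [← hkdef] at h; omega
      rw [if_pos h, he.neg_one_pow]
    · have he : Odd (J.1.card + k) := by
        rw [Nat.odd_add, Nat.odd_iff, Nat.even_iff]
        rw [← hkdef] at h; omega
      rw [if_neg h, he.neg_one_pow]
  -- Claim 1: d is in the kernel
  have hker : A.mulVec d = 0 := by
    funext V
    have h2 : A.mulVec d V = ∑ J ∈ Finset.univ.filter (fun J : Finset F => J.Nonempty),
        (if V.1 ⊆ J then (1:ℝ) else 0) * (-1 : ℝ) ^ (J.card + k) := by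
      rw [Matrix.mulVec, dotProduct]
      calc ∑ i : {J : Finset F // J.Nonempty}, A V i * d i
          = ∑ i : {J : Finset F // J.Nonempty},
            (fun J : Finset F => (if V.1 ⊆ J then (1:ℝ) else 0) * (-1 : ℝ) ^ (J.card + k)) i.1 :=
            Finset.sum_congr rfl (fun J _ => by rw [hA, hdval])
        _ = _ := (Finset.sum_subtype (p := fun J : Finset F => J.Nonempty)
            (Finset.univ.filter fun J : Finset F => J.Nonempty) (by simp)
            (fun J : Finset F => (if V.1 ⊆ J then (1:ℝ) else 0) * (-1 : ℝ) ^ (J.card + k))).symm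
    have h3 : ∀ J : Finset F, (if V.1 ⊆ J then (1:ℝ) else 0) * (-1 : ℝ) ^ (J.card + k)
        = if V.1 ⊆ J then (-1 : ℝ) ^ (J.card + k) else 0 := by
      intro J; split <;> ring
    have h4 : (Finset.univ.filter (fun J : Finset F => J.Nonempty)).filter
        (fun J => V.1 ⊆ J) = Finset.univ.filter (fun J : Finset F => V.1 ⊆ J) := by
      ext J
      simp only [Finset.mem_filter, Finset.mem_univ, true_and]
      exact ⟨fun h => h.2, fun h => ⟨V.2.2.mono h, h⟩⟩
    have h5 : ∀ J ∈ Finset.univ.filter (fun J : Finset F => V.1 ⊆ J),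
        (-1 : ℝ) ^ (J.card + k) = (-1 : ℝ) ^ J.card * (-1 : ℝ) ^ k :=
      fun J _ => pow_add _ _ _
    rw [h2, Finset.sum_congr rfl (fun J _ => h3 J), ← Finset.sum_filter, h4,
      Finset.sum_congr rfl h5, ← Finset.sum_mul,
      supersetSum V.1 (fun hVu => V.2.1 (hVu ▸ huniv)), zero_mul]
    rfl
  -- Claim 2: the sum of d is nonzero
  have hsum : (∑ J, d J) = -((-1 : ℝ) ^ k) := by
    have h1 : (∑ J, d J) = ∑ J ∈ Finset.univ.filter (fun J : Finset F => J.Nonempty),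
        (-1 : ℝ) ^ (J.card + k) := by
      calc ∑ J : {J : Finset F // J.Nonempty}, d J
          = ∑ J : {J : Finset F // J.Nonempty},
            (fun J : Finset F => (-1 : ℝ) ^ (J.card + k)) J.1 :=
            Finset.sum_congr rfl (fun J _ => by rw [hdval])
        _ = _ := (Finset.sum_subtype (p := fun J : Finset F => J.Nonempty)
            (Finset.univ.filter fun J : Finset F => J.Nonempty) (by simp)
            (fun J : Finset F => (-1 : ℝ) ^ (J.card + k))).symm
    have h2 : (Finset.univ : Finset (Finset F))
        = insert ∅ (Finset.univ.filter (fun J : Finset F => J.Nonempty)) := by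
      ext J
      simp only [Finset.mem_univ, Finset.mem_insert, Finset.mem_filter, true_and, true_iff]
      rcases J.eq_empty_or_nonempty with h | h
      · exact Or.inl h
      · exact Or.inr h
    have h3 : (∑ J : Finset F, (-1 : ℝ) ^ (J.card + k)) = 0 := by
      have h5 : ∀ J ∈ (Finset.univ : Finset F).powerset,
          (-1 : ℝ) ^ (J.card + k) = (-1 : ℝ) ^ J.card * (-1 : ℝ) ^ k :=
        fun J _ => pow_add _ _ _
      rw [← Finset.powerset_univ, Finset.sum_congr rfl h5, ← Finset.sum_mul,
        powR _ (Finset.univ_nonempty_iff.2 (Fintype.card_pos_iff.1 (Nat.pos_of_ne_zero hk))),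
        zero_mul]
    have h4 : ∅ ∉ Finset.univ.filter (fun J : Finset F => J.Nonempty) := by simp
    rw [h2, Finset.sum_insert h4, Finset.card_empty, zero_add] at h3
    rw [h1]
    linarith [h3]
  have hsumne : (∑ J, d J) ≠ 0 := by
    rw [hsum]
    rcases neg_one_pow_eq_or ℝ k with h | h <;> rw [h] <;> norm_num
  refine ⟨hker, hsumne, ?_⟩
  rintro ⟨y, hy⟩
  have h0 : y ⬝ᵥ A.mulVec d = 0 := by rw [hker]; simp [dotProduct]
  rw [Matrix.dotProduct_mulVec, hy] at h0
  apply hsumne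
  rw [← h0]
  simp [dotProduct]
end

section
/- A positive distribution (p_{ijk}) on the 7-cell three-way incomplete product satisfies the HAS conditional independence constraints p_{110}/(p_{100} p_{010}) = 1 and (p_{001} p_{111})/(p_{101} p_{011}) = 1 if and only if log p lies in the row space of the 5×7 matrix S_{[AC][BC]} with rows (1,0,0,1,1,0,1),(0,1,0,1,0,1,1),(0,0,1,0,1,1,1),(0,0,0,0,1,0,1),(0,0,0,0,0,1,1). -/
open Matrix

/-- A positive distribution `p` on the 7 cells (ordered
(100),(010),(001),(110),(101),(011),(111)) satisfies the HAS conditional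
independence constraints iff `log p` lies in the row space of `S_{[AC][BC]}`. -/
theorem stmt14 (p : Fin 7 → ℝ) (hp : ∀ i, 0 < p i)
    (S : Matrix (Fin 5) (Fin 7) ℝ)
    (hS : S = !![1,0,0,1,1,0,1;
                 0,1,0,1,0,1,1;
                 0,0,1,0,1,1,1;
                 0,0,0,0,1,0,1;
                 0,0,0,0,0,1,1]) :
    (p 3 / (p 0 * p 1) = 1 ∧ (p 2 * p 6) / (p 4 * p 5) = 1) ↔
      ∃ β : Fin 5 → ℝ, (fun i => Real.log (p i)) = Sᵀ.mulVec β := by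
  subst hS
  set l : Fin 7 → ℝ := fun i => Real.log (p i) with hl
  have r15 : ((![1,0,0,1,1,0,1] : Fin 7 → ℝ) 5) = 0 := rfl
  have r16 : ((![1,0,0,1,1,0,1] : Fin 7 → ℝ) 6) = 1 := rfl
  have r25 : ((![0,1,0,1,0,1,1] : Fin 7 → ℝ) 5) = 1 := rfl
  have r26 : ((![0,1,0,1,0,1,1] : Fin 7 → ℝ) 6) = 1 := rfl
  have r35 : ((![0,0,1,0,1,1,1] : Fin 7 → ℝ) 5) = 1 := rfl
  have r36 : ((![0,0,1,0,1,1,1] : Fin 7 → ℝ) 6) = 1 := rfl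
  have r45 : ((![0,0,0,0,1,0,1] : Fin 7 → ℝ) 5) = 0 := rfl
  have r46 : ((![0,0,0,0,1,0,1] : Fin 7 → ℝ) 6) = 1 := rfl
  have r55 : ((![0,0,0,0,0,1,1] : Fin 7 → ℝ) 5) = 1 := rfl
  have r56 : ((![0,0,0,0,0,1,1] : Fin 7 → ℝ) 6) = 1 := rfl
  constructor
  · rintro ⟨h1, h2⟩
    have e1 : p 3 = p 0 * p 1 := by
      have hne : p 0 * p 1 ≠ 0 := (mul_pos (hp 0) (hp 1)).ne'
      rw [div_eq_one_iff_eq hne] at h1; linarith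
    have e2 : p 2 * p 6 = p 4 * p 5 := by
      have hne : p 4 * p 5 ≠ 0 := (mul_pos (hp 4) (hp 5)).ne'
      rw [div_eq_one_iff_eq hne] at h2; linarith
    have L1 : l 3 = l 0 + l 1 := by
      simp only [hl]; rw [e1, Real.log_mul (hp 0).ne' (hp 1).ne']
    have L2 : l 2 + l 6 = l 4 + l 5 := by
      simp only [hl]
      rw [← Real.log_mul (hp 2).ne' (hp 6).ne', ← Real.log_mul (hp 4).ne' (hp 5).ne', e2]
    refine ⟨![l 0, l 1, l 2, l 4 - l 0 - l 2, l 5 - l 1 - l 2], ?_⟩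
    funext i
    fin_cases i <;>
      simp [Matrix.mulVec, dotProduct, Fin.sum_univ_succ,
        r15, r16, r25, r26, r35, r36, r45, r46, r55, r56] <;> linarith
  · rintro ⟨β, hβ⟩
    have h := fun i => congrFun hβ i
    have h0 := h 0; have h1 := h 1; have h2 := h 2; have h3 := h 3
    have h4 := h 4; have h5 := h 5; have h6 := h 6
    simp [Matrix.mulVec, dotProduct, Fin.sum_univ_succ, hl,
      r15, r16, r25, r26, r35, r36, r45, r46, r55, r56] at h0 h1 h2 h3 h4 h5 h6
    have L1 : Real.log (p 3) = Real.log (p 0 * p 1) := by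
      rw [Real.log_mul (hp 0).ne' (hp 1).ne']; linarith
    have L2 : Real.log (p 2 * p 6) = Real.log (p 4 * p 5) := by
      rw [Real.log_mul (hp 2).ne' (hp 6).ne', Real.log_mul (hp 4).ne' (hp 5).ne']; linarith
    have e1 : p 3 = p 0 * p 1 := by
      have := congrArg Real.exp L1
      rwa [Real.exp_log (hp 3), Real.exp_log (mul_pos (hp 0) (hp 1))] at this
    have e2 : p 2 * p 6 = p 4 * p 5 := by
      have := congrArg Real.exp L2
      rwa [Real.exp_log (mul_pos (hp 2) (hp 6)), Real.exp_log (mul_pos (hp 4) (hp 5))] at this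
    refine ⟨?_, ?_⟩
    · rw [e1, div_self (mul_pos (hp 0) (hp 1)).ne']
    · rw [e2, div_self (mul_pos (hp 4) (hp 5)).ne']
end

section
/- For a positive distribution on the three-way incomplete product, the no-second-order-AS-interaction constraint (p_{110} p_{101} p_{011})/(p_{100} p_{010} p_{001} p_{111}) = 1 holds if and only if CASR(A,B|C=0) = COR(A,B|C=1), if and only if CASR(A,C|B=0) = COR(A,C|B=1), if and only if CASR(B,C|A=0) = COR(B,C|A=1). -/
/-- The no-second-order-AS-interaction constraint holds iff
`CASR = COR` for each of the three conditionings. -/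
theorem stmt15 (p100 p010 p001 p110 p101 p011 p111 : ℝ)
    (h100 : 0 < p100) (h010 : 0 < p010) (h001 : 0 < p001)
    (h110 : 0 < p110) (h101 : 0 < p101) (h011 : 0 < p011) (h111 : 0 < p111) :
    ((p110 * p101 * p011) / (p100 * p010 * p001 * p111) = 1 ↔
        p110 / (p100 * p010) = (p111 * p001) / (p101 * p011)) ∧
    ((p110 * p101 * p011) / (p100 * p010 * p001 * p111) = 1 ↔
        p101 / (p100 * p001) = (p111 * p010) / (p110 * p011)) ∧
    ((p110 * p101 * p011) / (p100 * p010 * p001 * p111) = 1 ↔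
        p011 / (p010 * p001) = (p111 * p100) / (p101 * p110)) := by
  refine ⟨?_, ?_, ?_⟩ <;>
    rw [div_eq_one_iff_eq (by positivity),
      div_eq_div_iff (by positivity) (by positivity)] <;>
    constructor <;> intro h <;> nlinarith [h, mul_pos h100 h010, mul_pos h101 h011,
      mul_pos h110 h011, mul_pos h100 h001, mul_pos h010 h001, mul_pos h101 h110]
end
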